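/- Let H = (V, ℰ) be a hypergraph (hyperedges are nonempty, possibly of size one) and let v ∈ V be a vertex that has a twin u ≠ v. Then: (i) the map F ↦ F ∖ {v} is injective on ℰ; and (ii) for all vertices x, y ∈ V ∖ {v}, the vertices x and y are twins in the hypergraph (V ∖ {v}, {F ∖ {v} : F ∈ ℰ}) if and only if they are twins in H. -/

import Mathlib

/-- A hypergraph: a finite vertex set `V ⊆ ℕ` together with a finite family of
hyperedges, each a nonempty subset of `V` (size-one hyperedges allowed). -/
structure FinHypergraph where
  V : Finset ℕ
  E : Finset (Finset ℕ)
  edge_sub : ∀ F ∈ E, F ⊆ V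
  edge_nonempty : ∀ F ∈ E, F.Nonempty

/-- `x` and `y` are twins with respect to the hyperedge family `E`:
they are contained in precisely the same hyperedges. -/
def AreTwins (E : Finset (Finset ℕ)) (x y : ℕ) : Prop :=
  E.filter (fun F => x ∈ F) = E.filter (fun F => y ∈ F)

/-- If `v` has a twin `u ≠ v` in `H`, then (i) `F ↦ F ∖ {v}` is
injective on the hyperedge family of `H`, and (ii) for vertices
`x, y ∈ V ∖ {v}`, being twins in `(V ∖ {v}, {F ∖ {v} : F ∈ ℰ})` is equivalent
to being twins in `H`. -/
theorem delete_twin_preserves_edges_and_twins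
    (H : FinHypergraph) (u v : ℕ) (hu : u ∈ H.V) (hv : v ∈ H.V) (huv : u ≠ v)
    (htwin : AreTwins H.E u v) :
    Set.InjOn (fun F => F.erase v) (H.E : Set (Finset ℕ)) ∧
    ∀ x ∈ H.V.erase v, ∀ y ∈ H.V.erase v,
      (AreTwins (H.E.image (fun F => F.erase v)) x y ↔ AreTwins H.E x y) := by
  -- key: for every edge F, u ∈ F ↔ v ∈ F
  have key : ∀ F ∈ H.E, (u ∈ F ↔ v ∈ F) := by
    intro F hF
    constructor
    · intro h
      have : F ∈ H.E.filter (fun F => v ∈ F) := htwin ▸ Finset.mem_filter.mpr ⟨hF, h⟩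
      exact (Finset.mem_filter.mp this).2
    · intro h
      have : F ∈ H.E.filter (fun F => u ∈ F) := by
        rw [htwin]; exact Finset.mem_filter.mpr ⟨hF, h⟩
      exact (Finset.mem_filter.mp this).2
  have hinj : Set.InjOn (fun F => F.erase v) (H.E : Set (Finset ℕ)) := by
    intro F hF G hG h
    simp only at h
    have hF' : F ∈ H.E := hF
    have hG' : G ∈ H.E := hG
    have hvmem : v ∈ F ↔ v ∈ G := by
      constructor
      · intro hvF
        by_contra hvG
        have huF : u ∈ F := (key F hF').mpr hvF
        have huG : u ∈ G := by
          have : u ∈ F.erase v := Finset.mem_erase.mpr ⟨huv, huF⟩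
          rw [h] at this
          exact (Finset.mem_erase.mp this).2
        exact hvG ((key G hG').mp huG)
      · intro hvG
        by_contra hvF
        have huG : u ∈ G := (key G hG').mpr hvG
        have huF : u ∈ F := by
          have : u ∈ G.erase v := Finset.mem_erase.mpr ⟨huv, huG⟩
          rw [← h] at this
          exact (Finset.mem_erase.mp this).2
        exact hvF ((key F hF').mp huF)
    ext a
    by_cases ha : a = v
    · subst ha; exact hvmem
    · constructor
      · intro haF
        have : a ∈ F.erase v := Finset.mem_erase.mpr ⟨ha, haF⟩
        rw [h] at this
        exact (Finset.mem_erase.mp this).2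
      · intro haG
        have : a ∈ G.erase v := Finset.mem_erase.mpr ⟨ha, haG⟩
        rw [← h] at this
        exact (Finset.mem_erase.mp this).2
  refine ⟨hinj, ?_⟩
  intro x hx y hy
  have hxv : x ≠ v := (Finset.mem_erase.mp hx).1
  have hyv : y ≠ v := (Finset.mem_erase.mp hy).1
  -- filter commutes with image for z ≠ v
  have hcomm : ∀ z : ℕ, z ≠ v →
      (H.E.image (fun F => F.erase v)).filter (fun F => z ∈ F)
        = (H.E.filter (fun F => z ∈ F)).image (fun F => F.erase v) := by
    intro z hz
    ext G
    simp only [Finset.mem_filter, Finset.mem_image]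
    constructor
    · rintro ⟨⟨F, hF, rfl⟩, hzG⟩
      exact ⟨F, ⟨hF, (Finset.mem_erase.mp hzG).2⟩, rfl⟩
    · rintro ⟨F, ⟨hF, hzF⟩, rfl⟩
      exact ⟨⟨F, hF, rfl⟩, Finset.mem_erase.mpr ⟨hz, hzF⟩⟩
  constructor
  · intro h
    unfold AreTwins at h ⊢
    rw [hcomm x hxv, hcomm y hyv] at h
    -- images of subsets of E equal → sets equal by injOn
    apply Finset.ext
    intro F
    constructor
    · intro hFx
      have hF : F ∈ H.E := (Finset.mem_filter.mp hFx).1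
      have : F.erase v ∈ (H.E.filter (fun F => y ∈ F)).image (fun F => F.erase v) := by
        rw [← h]; exact Finset.mem_image_of_mem _ hFx
      obtain ⟨G, hG, hGF⟩ := Finset.mem_image.mp this
      have hGE : G ∈ H.E := (Finset.mem_filter.mp hG).1
      have : G = F := hinj hGE hF hGF
      exact this ▸ hG
    · intro hFy
      have hF : F ∈ H.E := (Finset.mem_filter.mp hFy).1
      have : F.erase v ∈ (H.E.filter (fun F => x ∈ F)).image (fun F => F.erase v) := by
        rw [h]; exact Finset.mem_image_of_mem _ hFy
      obtain ⟨G, hG, hGF⟩ := Finset.mem_image.mp this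
      have hGE : G ∈ H.E := (Finset.mem_filter.mp hG).1
      have : G = F := hinj hGE hF hGF
      exact this ▸ hG
  · intro h
    unfold AreTwins at h ⊢
    rw [hcomm x hxv, hcomm y hyv, h]
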